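/- The function h(u) = u - ln(u) is strictly increasing on [1,∞), and for any x ≥ 1, h⁻¹(x) = inf_{z > 1} z·(x - 1 + ln(z/(z-1))). -/

import Mathlib

/-- Lower bound: for `u ≥ 1` with `x = u - log u`, every element of the set is `≥ u`. -/
lemma aux_lower (u z : ℝ) (hu : 1 ≤ u) (hz : 1 < z) :
    u ≤ z * ((u - Real.log u) - 1 + Real.log (z / (z - 1))) := by
  have hz0 : (0:ℝ) < z := by linarith
  have hz1 : (0:ℝ) < z - 1 := by linarith
  have hu0 : (0:ℝ) < u := by linarith
  set w : ℝ := z / (z - 1) with hw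
  have hw0 : 0 < w := by positivity
  have hlog : Real.log (u / w) ≤ u / w - 1 := Real.log_le_sub_one_of_pos (by positivity)
  rw [Real.log_div hu0.ne' hw0.ne'] at hlog
  have h2 : u / w = u * (z - 1) / z := by
    rw [hw]; field_simp
  have h3 : u - u * (z - 1) / z = u / z := by field_simp; ring
  have key : u / z ≤ u - Real.log u - 1 + Real.log w := by
    rw [h2] at hlog; linarith
  calc u = z * (u / z) := by field_simp
    _ ≤ z * (u - Real.log u - 1 + Real.log w) := by
        exact mul_le_mul_of_nonneg_left key hz0.le
    _ = z * ((u - Real.log u) - 1 + Real.log (z / (z - 1))) := by rw [hw]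

/-- `h u = u - log u` is strictly increasing on `[1, ∞)`, and for `x ≥ 1` its inverse
satisfies `h⁻¹ x = inf_{z > 1} z (x - 1 + log (z / (z - 1)))`. -/
theorem stmt_1 (hinv : ℝ → ℝ)
    (hinv_spec : ∀ x, 1 ≤ x → 1 ≤ hinv x ∧ hinv x - Real.log (hinv x) = x) :
    StrictMonoOn (fun u : ℝ => u - Real.log u) (Set.Ici 1) ∧
    ∀ x, 1 ≤ x →
      hinv x = sInf {y : ℝ | ∃ z : ℝ, 1 < z ∧ y = z * (x - 1 + Real.log (z / (z - 1)))} := by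
  constructor
  · apply strictMonoOn_of_deriv_pos (convex_Ici 1)
    · exact continuousOn_id.sub (Real.continuousOn_log.mono (fun x hx => by
        simp only [Set.mem_Ici, Set.mem_compl_iff, Set.mem_singleton_iff] at hx ⊢
        intro h; rw [h] at hx; linarith))
    · intro u hu
      rw [interior_Ici] at hu
      have h0 : u ≠ 0 := by intro h; rw [h] at hu; simp at hu; linarith
      have hd : deriv (fun u : ℝ => u - Real.log u) u = 1 - u⁻¹ :=
        ((hasDerivAt_id u).sub (Real.hasDerivAt_log h0)).deriv
      rw [hd]
      have : u⁻¹ < 1 := by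
        rw [inv_lt_one_iff₀]; right; exact hu
      linarith
  · intro x hx
    obtain ⟨hu1, hux⟩ := hinv_spec x hx
    set u := hinv x with hu
    set S : Set ℝ := {y : ℝ | ∃ z : ℝ, 1 < z ∧ y = z * (x - 1 + Real.log (z / (z - 1)))} with hS
    have hlb : ∀ y ∈ S, u ≤ y := by
      rintro y ⟨z, hz, rfl⟩
      rw [← hux]
      exact aux_lower u z hu1 hz
    have hbdd : BddBelow S := ⟨u, hlb⟩
    rcases eq_or_lt_of_le hu1 with heq | hlt
    · -- u = 1
      have hx1 : x = 1 := by rw [← hux, ← heq]; simp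
      have hub : ∀ ε : ℝ, 0 < ε → sInf S ≤ u + ε := by
        intro ε hε
        set z : ℝ := 1 + 1/ε with hzdef
        have hz : 1 < z := by
          rw [hzdef]
          have : 0 < 1/ε := by positivity
          linarith
        have hz1 : (0:ℝ) < z - 1 := by linarith
        have hmem : z * (x - 1 + Real.log (z / (z - 1))) ∈ S := ⟨z, hz, rfl⟩
        have hval : z * (x - 1 + Real.log (z / (z - 1))) ≤ u + ε := by
          rw [hx1]
          have hlog : Real.log (z / (z - 1)) ≤ z / (z - 1) - 1 :=
            Real.log_le_sub_one_of_pos (by positivity)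
          have h4 : z / (z - 1) - 1 = 1 / (z - 1) := by field_simp; ring
          have h5 : z * (1 / (z - 1)) = 1 + ε := by
            rw [hzdef]; field_simp; ring
          have h6 : z * ((1:ℝ) - 1 + Real.log (z / (z - 1))) ≤ z * (1 / (z - 1)) := by
            have : (1:ℝ) - 1 + Real.log (z / (z - 1)) ≤ 1 / (z - 1) := by
              rw [← h4]; linarith
            exact mul_le_mul_of_nonneg_left this (by linarith)
          rw [← heq]; linarith
        exact le_trans (csInf_le hbdd hmem) hval
      have h1 : sInf S ≤ u := le_of_forall_pos_le_add hub
      have h2 : u ≤ sInf S := le_csInf ⟨_, ⟨2, by norm_num, rfl⟩⟩ hlb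
      linarith
    · -- 1 < u : minimum attained at z = u / (u - 1)
      have hu1' : (0:ℝ) < u - 1 := by linarith
      have hu0 : (0:ℝ) < u := by linarith
      set z : ℝ := u / (u - 1) with hzdef
      have hz : 1 < z := by
        rw [hzdef, lt_div_iff₀ hu1']; linarith
      have hz1 : z - 1 = 1 / (u - 1) := by rw [hzdef]; field_simp; ring
      have hzw : z / (z - 1) = u := by
        rw [hz1, hzdef]; field_simp
      have hval : z * (x - 1 + Real.log (z / (z - 1))) = u := by
        rw [hzw, ← hux, hzdef]
        have hr : u - Real.log u - 1 + Real.log u = u - 1 := by ring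
        rw [hr]
        field_simp
      have hmem : u ∈ S := ⟨z, hz, hval.symm⟩
      exact (le_antisymm (csInf_le hbdd hmem) (le_csInf ⟨u, hmem⟩ hlb)).symm
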